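/- Suppose E‖Z_1‖² < ∞ and set μ = E[Z_1]. Then n^{-1} L_n → 2‖μ‖ almost surely as n → ∞. -/

import Mathlib

open MeasureTheory ProbabilityTheory Filter
open scoped RealInnerProductSpace

/-- The unit vector `(cos θ, sin θ)` in the plane. -/
noncomputable def dir (θ : ℝ) : EuclideanSpace ℝ (Fin 2) :=
  (EuclideanSpace.equiv (Fin 2) ℝ).symm ![Real.cos θ, Real.sin θ]

/-- The random walk with increments `Z`: `walk Z n ω = Z 0 ω + ⋯ + Z (n-1) ω`. -/
noncomputable def walk {Ω : Type*} (Z : ℕ → Ω → EuclideanSpace ℝ (Fin 2)) (n : ℕ) (ω : Ω) :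
    EuclideanSpace ℝ (Fin 2) :=
  ∑ i ∈ Finset.range n, Z i ω

/-- Perimeter length of the convex hull of `S 0, …, S n`, via Cauchy's formula. -/
noncomputable def perim {Ω : Type*} (Z : ℕ → Ω → EuclideanSpace ℝ (Fin 2)) (n : ℕ) (ω : Ω) : ℝ :=
  ∫ θ in (0:ℝ)..Real.pi,
    (((Finset.range (n+1)).sup' Finset.nonempty_range_add_one
        (fun i => ⟪walk Z i ω, dir θ⟫))
      - ((Finset.range (n+1)).inf' Finset.nonempty_range_add_one
        (fun i => ⟪walk Z i ω, dir θ⟫)))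

lemma inner_dir (x : EuclideanSpace ℝ (Fin 2)) (θ : ℝ) :
    ⟪x, dir θ⟫ = x 0 * Real.cos θ + x 1 * Real.sin θ := by
  simp [dir, PiLp.inner_apply, Fin.sum_univ_two, RCLike.inner_apply]
  ring

lemma norm_dir (θ : ℝ) : ‖dir θ‖ = 1 := by
  rw [EuclideanSpace.norm_eq]
  simp [dir, Fin.sum_univ_two, Real.norm_eq_abs, sq_abs]

lemma continuous_inner_dir (x : EuclideanSpace ℝ (Fin 2)) :
    Continuous fun θ => ⟪x, dir θ⟫ := by
  simp only [inner_dir]; fun_prop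

lemma integral_abs_inner_dir (x : EuclideanSpace ℝ (Fin 2)) :
    (∫ θ in (0:ℝ)..Real.pi, |⟪x, dir θ⟫|) = 2 * ‖x‖ := by
  have hnorm : ‖x‖ = Real.sqrt (x 0 ^ 2 + x 1 ^ 2) := by
    rw [EuclideanSpace.norm_eq]
    simp [Fin.sum_univ_two, Real.norm_eq_abs, sq_abs]
  by_cases hx : x = 0
  · simp [hx]
  · have hxn : 0 < ‖x‖ := norm_pos_iff.mpr hx
    set z : ℂ := ⟨x 0, x 1⟩ with hz
    have hz0 : z ≠ 0 := by
      intro h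
      apply hx
      have h0 : x 0 = 0 := congrArg Complex.re h
      have h1 : x 1 = 0 := congrArg Complex.im h
      ext i
      fin_cases i <;> simpa [h0, h1]
    have habs : ‖z‖ = ‖x‖ := by
      rw [hnorm, Complex.norm_def, Complex.normSq_apply]
      norm_num [hz]
      ring_nf
    set φ := Complex.arg z with hφ
    have hx0 : x 0 = ‖x‖ * Real.cos φ := by
      rw [hφ, Complex.cos_arg hz0, habs]
      field_simp [hz]
      rfl
    have hx1 : x 1 = ‖x‖ * Real.sin φ := by
      rw [hφ, Complex.sin_arg, habs]
      field_simp [hz]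
      rfl
    have key : ∀ θ : ℝ, |⟪x, dir θ⟫| = ‖x‖ * |Real.cos (θ - φ)| := by
      intro θ
      have : ⟪x, dir θ⟫ = ‖x‖ * Real.cos (θ - φ) := by
        rw [inner_dir, hx0, hx1, Real.cos_sub]; ring
      rw [this, abs_mul, abs_of_nonneg (norm_nonneg x)]
    simp only [key]
    rw [intervalIntegral.integral_const_mul]
    have h1 : (∫ θ in (0:ℝ)..Real.pi, |Real.cos (θ - φ)|)
        = ∫ u in (0-φ)..(Real.pi-φ), |Real.cos u| :=
      intervalIntegral.integral_comp_sub_right (fun u => |Real.cos u|) φ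
    have hper : Function.Periodic (fun u => |Real.cos u|) Real.pi := fun u => by
      simp [Real.cos_add_pi]
    have h2 : (∫ u in (0-φ)..(0-φ+Real.pi), |Real.cos u|)
        = ∫ u in (-(Real.pi/2))..(-(Real.pi/2)+Real.pi), |Real.cos u| :=
      hper.intervalIntegral_add_eq (0-φ) (-(Real.pi/2))
    have h3 : (∫ u in (-(Real.pi/2))..(Real.pi/2), |Real.cos u|) = 2 := by
      rw [intervalIntegral.integral_congr (g := Real.cos) ?_, integral_cos]
      · norm_num
      · intro u hu
        rw [Set.uIcc_of_le (by linarith [Real.pi_pos])] at hu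
        exact abs_of_nonneg (Real.cos_nonneg_of_mem_Icc hu)
    rw [h1, show Real.pi - φ = 0 - φ + Real.pi by ring, h2,
      show -(Real.pi/2) + Real.pi = Real.pi/2 by ring, h3]
    ring

lemma inf'_eq_neg_sup'_neg {n : ℕ} (f : ℕ → ℝ) :
    (Finset.range (n+1)).inf' Finset.nonempty_range_add_one f
      = - (Finset.range (n+1)).sup' Finset.nonempty_range_add_one (fun i => -f i) := by
  refine le_antisymm ?_ ?_
  · rw [le_neg]
    refine Finset.sup'_le _ _ fun i hi => ?_
    have := Finset.inf'_le f hi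
    linarith
  · refine Finset.le_inf' _ _ fun i hi => ?_
    have := Finset.le_sup' (fun i => -f i) hi
    linarith

lemma tendsto_sup'_div (a : ℕ → ℝ) (h0 : a 0 = 0) {c : ℝ}
    (h : Tendsto (fun n => a n / n) atTop (nhds c)) :
    Tendsto (fun n : ℕ =>
      ((Finset.range (n+1)).sup' Finset.nonempty_range_add_one a) / n) atTop
      (nhds (max c 0)) := by
  rw [Metric.tendsto_atTop] at h ⊢
  intro ε hε
  obtain ⟨N, hN⟩ := h (ε/4) (by positivity)
  set N' := max N 1 with hN'
  set C : ℝ := ∑ i ∈ Finset.range N', |a i| with hC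
  have hC0 : 0 ≤ C := Finset.sum_nonneg fun i _ => abs_nonneg _
  have htend : Tendsto (fun n : ℕ => C / n) atTop (nhds 0) :=
    tendsto_const_div_atTop_nhds_zero_nat C
  obtain ⟨N2, hN2⟩ := (Metric.tendsto_atTop.1 htend) (ε/4) (by positivity)
  refine ⟨max N' N2, fun n hn => ?_⟩
  have hnN' : N' ≤ n := le_trans (le_max_left _ _) hn
  have hn1 : 1 ≤ n := le_trans (le_max_right N 1) hnN'
  have hnpos : (0:ℝ) < n := by exact_mod_cast hn1
  set M := (Finset.range (n+1)).sup' Finset.nonempty_range_add_one a with hM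
  have hmax0 : (0:ℝ) ≤ max c 0 := le_max_right c 0
  have hub : M ≤ (max c 0 + ε/4) * n + C := by
    refine Finset.sup'_le _ _ fun i hi => ?_
    have hi' : i ≤ n := Nat.lt_succ_iff.mp (Finset.mem_range.mp hi)
    have hin : (i:ℝ) ≤ n := by exact_mod_cast hi'
    by_cases hiN : i < N'
    · have hai : a i ≤ C := le_trans (le_abs_self _)
        (Finset.single_le_sum (f := fun i => |a i|) (fun _ _ => abs_nonneg _)
          (Finset.mem_range.mpr hiN))
      nlinarith
    · push_neg at hiN
      have hiN2 : N ≤ i := le_trans (le_max_left _ _) hiN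
      have hi1 : 1 ≤ i := le_trans (le_max_right N 1) hiN
      have hipos : (0:ℝ) < i := by exact_mod_cast hi1
      have hd := hN i hiN2
      rw [Real.dist_eq] at hd
      have h1 : a i / i < c + ε/4 := by have := (abs_lt.mp hd).2; linarith
      have h2 : a i < (c + ε/4) * i := by
        rwa [div_lt_iff₀ hipos] at h1
      have h3 : (c + ε/4) * i ≤ max (c + ε/4) 0 * i :=
        mul_le_mul_of_nonneg_right (le_max_left _ _) hipos.le
      have h4 : max (c + ε/4) 0 * i ≤ max (c + ε/4) 0 * n :=
        mul_le_mul_of_nonneg_left hin (le_max_right _ _)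
      have h5 : max (c + ε/4) 0 ≤ max c 0 + ε/4 :=
        max_le (by linarith [le_max_left c 0]) (by linarith)
      nlinarith
  have hlb : (max c 0 - ε/4) * n ≤ M := by
    have h0mem : (0:ℕ) ∈ Finset.range (n+1) := Finset.mem_range.mpr (Nat.succ_pos n)
    have hM0 : (0:ℝ) ≤ M := h0 ▸ Finset.le_sup' a h0mem
    have hnmem : n ∈ Finset.range (n+1) := Finset.mem_range.mpr (Nat.lt_succ_self n)
    have hMn : a n ≤ M := Finset.le_sup' a hnmem
    have hd := hN n (le_trans (le_max_left N 1) hnN')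
    rw [Real.dist_eq] at hd
    have h1 : c - ε/4 < a n / n := by have := (abs_lt.mp hd).1; linarith
    have h2 : (c - ε/4) * n < a n := by rwa [← lt_div_iff₀ hnpos]
    rcases max_cases c 0 with ⟨hm, _⟩ | ⟨hm, _⟩ <;> rw [hm] <;> nlinarith
  have hCn : C / n < ε/4 := by
    have := hN2 n (le_trans (le_max_right N' N2) hn)
    rw [Real.dist_eq, sub_zero] at this
    exact lt_of_abs_lt this
  have hMu : M / n ≤ max c 0 + ε/4 + C/n := by
    rw [div_le_iff₀ hnpos]
    have : (max c 0 + ε/4 + C/n) * n = (max c 0 + ε/4) * n + (C/n) * n := by ring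
    rw [this, div_mul_cancel₀ _ hnpos.ne']
    exact hub
  have hMl : max c 0 - ε/4 ≤ M / n := (le_div_iff₀ hnpos).mpr hlb
  rw [Real.dist_eq, abs_sub_lt_iff]
  constructor <;> linarith

/-- Strong law of large numbers for the perimeter length: `n⁻¹ L n → 2‖μ‖` a.s. -/
theorem perimeter_strong_law {Ω : Type*} [MeasurableSpace Ω]
    (P : Measure Ω) [IsProbabilityMeasure P]
    (Z : ℕ → Ω → EuclideanSpace ℝ (Fin 2))
    (hmeas : ∀ i, Measurable (Z i))
    (hindep : iIndepFun Z P)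
    (hident : ∀ i, IdentDistrib (Z i) (Z 0) P P)
    (hmom : Integrable (fun ω => ‖Z 0 ω‖ ^ 2) P) :
    ∀ᵐ ω ∂P, Tendsto (fun n : ℕ => perim Z n ω / (n : ℝ)) atTop
      (nhds (2 * ‖∫ ω', Z 0 ω' ∂P‖)) := by
  -- integrability of Z 0
  have hZint : Integrable (Z 0) P := by
    have h1 : Integrable (fun ω => 1 + ‖Z 0 ω‖ ^ 2) P := (integrable_const 1).add hmom
    refine h1.mono (hmeas 0).aestronglyMeasurable (ae_of_all _ fun ω => ?_)
    have ht : ∀ t : ℝ, 0 ≤ t → t ≤ 1 + t ^ 2 := fun t ht => by nlinarith [sq_nonneg (t - 1)]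
    calc ‖Z 0 ω‖ ≤ 1 + ‖Z 0 ω‖ ^ 2 := ht _ (norm_nonneg _)
      _ ≤ ‖1 + ‖Z 0 ω‖ ^ 2‖ := le_abs_self _
  have hpair : Pairwise (Function.onFun (IndepFun · · P) Z) := fun i j hij => hindep.indepFun hij
  have hSLLN := strong_law_ae Z hZint hpair hident
  filter_upwards [hSLLN] with ω hω
  set μv : EuclideanSpace ℝ (Fin 2) := ∫ ω', Z 0 ω' ∂P with hμv
  have hω' : Tendsto (fun n : ℕ => (n : ℝ)⁻¹ • walk Z n ω) atTop (nhds μv) := hω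
  -- bound on the walk
  obtain ⟨B, hBmem⟩ := hω'.norm.bddAbove_range
  have hBn : ∀ n : ℕ, ‖(n : ℝ)⁻¹ • walk Z n ω‖ ≤ B := fun n => hBmem ⟨n, rfl⟩
  have hB0 : 0 ≤ B := le_trans (norm_nonneg _) (hBn 0)
  have hwalk0 : walk Z 0 ω = 0 := by simp [walk]
  have hB : ∀ i : ℕ, ‖walk Z i ω‖ ≤ B * i := by
    intro i
    rcases Nat.eq_zero_or_pos i with rfl | hi
    · simp [hwalk0]
    · have hipos : (0:ℝ) < i := by exact_mod_cast hi
      have := hBn i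
      rw [norm_smul, norm_inv, Real.norm_natCast] at this
      rw [inv_mul_le_iff₀ hipos] at this
      linarith
  -- the integrand functions
  set F : ℕ → ℝ → ℝ := fun n θ =>
    (((Finset.range (n+1)).sup' Finset.nonempty_range_add_one
        (fun i => ⟪walk Z i ω, dir θ⟫))
      - ((Finset.range (n+1)).inf' Finset.nonempty_range_add_one
        (fun i => ⟪walk Z i ω, dir θ⟫))) / n with hF
  have hmeasF : ∀ n : ℕ, AEStronglyMeasurable (F n)
      (volume.restrict (Set.uIoc (0:ℝ) Real.pi)) := by
    intro n
    refine Continuous.aestronglyMeasurable ?_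
    refine Continuous.div_const (Continuous.sub ?_ ?_) _
    · exact Continuous.finset_sup'_apply Finset.nonempty_range_add_one
        fun i _ => continuous_inner_dir (walk Z i ω)
    · exact Continuous.finset_inf'_apply Finset.nonempty_range_add_one
        fun i _ => continuous_inner_dir (walk Z i ω)
  have hbound : ∀ᶠ n : ℕ in atTop, ∀ᵐ θ ∂volume,
      θ ∈ Set.uIoc (0:ℝ) Real.pi → ‖F n θ‖ ≤ 2 * B := by
    filter_upwards [eventually_ge_atTop 1] with n hn
    refine ae_of_all _ fun θ _ => ?_
    have hnpos : (0:ℝ) < n := by exact_mod_cast hn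
    have hib : ∀ i ∈ Finset.range (n+1), |⟪walk Z i ω, dir θ⟫| ≤ B * n := by
      intro i hi
      have hin : (i:ℝ) ≤ n := by exact_mod_cast Nat.lt_succ_iff.mp (Finset.mem_range.mp hi)
      calc |⟪walk Z i ω, dir θ⟫| ≤ ‖walk Z i ω‖ * ‖dir θ‖ := abs_real_inner_le_norm _ _
        _ = ‖walk Z i ω‖ := by rw [norm_dir, mul_one]
        _ ≤ B * i := hB i
        _ ≤ B * n := mul_le_mul_of_nonneg_left hin hB0
    have h1 : (Finset.range (n+1)).sup' Finset.nonempty_range_add_one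
        (fun i => ⟪walk Z i ω, dir θ⟫) ≤ B * n :=
      Finset.sup'_le _ _ fun i hi => le_trans (le_abs_self _) (hib i hi)
    have h2 : -(B * n) ≤ (Finset.range (n+1)).inf' Finset.nonempty_range_add_one
        (fun i => ⟪walk Z i ω, dir θ⟫) :=
      Finset.le_inf' _ _ fun i hi => neg_le_of_abs_le (hib i hi)
    have h0mem : (0:ℕ) ∈ Finset.range (n+1) := Finset.mem_range.mpr (Nat.succ_pos n)
    have h3 : (Finset.range (n+1)).inf' Finset.nonempty_range_add_one
          (fun i => ⟪walk Z i ω, dir θ⟫)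
        ≤ (Finset.range (n+1)).sup' Finset.nonempty_range_add_one
          (fun i => ⟪walk Z i ω, dir θ⟫) :=
      le_trans (Finset.inf'_le _ h0mem) (Finset.le_sup' (fun i => ⟪walk Z i ω, dir θ⟫) h0mem)
    rw [hF]
    simp only [Real.norm_eq_abs, abs_div, abs_of_nonneg (sub_nonneg.mpr h3),
      abs_of_nonneg hnpos.le]
    rw [div_le_iff₀ hnpos]
    nlinarith
  have hlim : ∀ᵐ θ ∂volume, θ ∈ Set.uIoc (0:ℝ) Real.pi →
      Tendsto (fun n => F n θ) atTop (nhds |⟪μv, dir θ⟫|) := by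
    refine ae_of_all _ fun θ _ => ?_
    set c : ℝ := ⟪μv, dir θ⟫ with hc
    have hcv : Tendsto (fun n : ℕ => ⟪walk Z n ω, dir θ⟫ / n) atTop (nhds c) := by
      have h := Filter.Tendsto.inner (𝕜 := ℝ) hω' (tendsto_const_nhds (x := dir θ))
      refine h.congr fun n => ?_
      rw [real_inner_smul_left, inv_mul_eq_div]
    have h0θ : ⟪walk Z 0 ω, dir θ⟫ = 0 := by rw [hwalk0]; exact inner_zero_left _
    have hsup := tendsto_sup'_div (fun i => ⟪walk Z i ω, dir θ⟫) h0θ hcv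
    have hcvneg : Tendsto (fun n : ℕ => (-⟪walk Z n ω, dir θ⟫) / n) atTop (nhds (-c)) := by
      refine (hcv.neg).congr fun n => ?_
      rw [neg_div]
    have hsup2 := tendsto_sup'_div (fun i => -⟪walk Z i ω, dir θ⟫) (by simp [h0θ]) hcvneg
    have hinf : Tendsto (fun n : ℕ =>
        ((Finset.range (n+1)).inf' Finset.nonempty_range_add_one
          (fun i => ⟪walk Z i ω, dir θ⟫)) / n) atTop (nhds (-(max (-c) 0))) := by
      refine (hsup2.neg).congr fun n => ?_
      rw [inf'_eq_neg_sup'_neg, neg_div]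
    have habs : |c| = max c 0 - -(max (-c) 0) := by
      rcases le_total 0 c with h | h
      · rw [abs_of_nonneg h, max_eq_left h, max_eq_right (neg_nonpos.mpr h)]; ring
      · rw [abs_of_nonpos h, max_eq_right h, max_eq_left (neg_nonneg.mpr h)]; ring
    rw [habs]
    refine (hsup.sub hinf).congr fun n => ?_
    simp only [hF, sub_div]
  have hDCT := intervalIntegral.tendsto_integral_filter_of_dominated_convergence
    (μ := volume) (a := (0:ℝ)) (b := Real.pi) (F := F)
    (f := fun θ => |⟪μv, dir θ⟫|) (fun _ => 2 * B)
    (Eventually.of_forall hmeasF) hbound (intervalIntegrable_const) hlim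
  rw [show (2:ℝ) * ‖μv‖ = ∫ θ in (0:ℝ)..Real.pi, |⟪μv, dir θ⟫| from
    (integral_abs_inner_dir μv).symm]
  refine hDCT.congr fun n => ?_
  rw [hF]
  simp only
  rw [intervalIntegral.integral_div]
  rfl
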